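/- Let (G,κ) be a proper edge coloring of a finite simple graph. Then 𝔊_κ is contained in the centralizer of Aut_κ(G) in Sym(V(G)). In particular, if G has at least 3 vertices and 𝔊_κ = Sym(V(G)), then Aut_κ(G) is the trivial group. -/

import Mathlib

open scoped Classical

/-- A proper edge coloring of a finite simple graph `G` with colors `{1, …, k}`:
it assigns colors in `{1, …, k}` to edges, is surjective onto `{1, …, k}`, and
incident edges receive distinct colors. -/
def IsProperEdgeColoring {V : Type*} (G : SimpleGraph V) (k : ℕ) (κ : Sym2 V → ℕ) : Prop :=
  (∀ e ∈ G.edgeSet, κ e ∈ Finset.Icc 1 k) ∧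
  (∀ a ∈ Finset.Icc 1 k, ∃ e ∈ G.edgeSet, κ e = a) ∧
  (∀ u v w : V, G.Adj u v → G.Adj u w → v ≠ w → κ s(u, v) ≠ κ s(u, w))
/-- `IsToggle G κ a τ` says that the permutation `τ` is the product of the
transpositions `(i j)` over all edges `{i,j}` of `G` colored `a`: it swaps the two
endpoints of every edge colored `a` and fixes all other vertices. -/
def IsToggle {V : Type*} (G : SimpleGraph V) (κ : Sym2 V → ℕ) (a : ℕ) (τ : Equiv.Perm V) : Prop :=
  ∀ v w : V, v ≠ w → (τ v = w ↔ G.Adj v w ∧ κ s(v, w) = a)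
/-- The coloring group `𝔊_κ`: the subgroup of `Sym(V)` generated by the
permutations `τ_1, …, τ_k` associated to the colors `1, …, k`. -/
def coloringGroup {V : Type*} (G : SimpleGraph V) (k : ℕ) (κ : Sym2 V → ℕ) :
    Subgroup (Equiv.Perm V) :=
  Subgroup.closure { τ : Equiv.Perm V | ∃ a : ℕ, 1 ≤ a ∧ a ≤ k ∧ IsToggle G κ a τ }
/-- `IsColorAut G κ σ`: membership in `Aut_κ(G)`, i.e. `{i,j}` is an edge of `G`
colored `a` if and only if `{σ i, σ j}` is an edge of `G` colored `a`. -/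
def IsColorAut {V : Type*} (G : SimpleGraph V) (κ : Sym2 V → ℕ) (σ : Equiv.Perm V) : Prop :=
  ∀ i j : V, ∀ a : ℕ,
    (G.Adj i j ∧ κ s(i, j) = a) ↔ (G.Adj (σ i) (σ j) ∧ κ s(σ i, σ j) = a)

theorem toggle_unique {V : Type*} {G : SimpleGraph V} {κ : Sym2 V → ℕ} {a : ℕ}
    {τ τ' : Equiv.Perm V} (h : IsToggle G κ a τ) (h' : IsToggle G κ a τ') : τ = τ' := by
  ext v
  by_cases hv : τ v = v
  · by_cases hv' : τ' v = v
    · rw [hv, hv']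
    · exfalso
      have := (h' v (τ' v) (fun e => hv' e.symm)).mp rfl
      exact hv' (((h v (τ' v) (fun e => hv' e.symm)).mpr this).symm.trans hv)
  · have := (h v (τ v) (fun e => hv e.symm)).mp rfl
    exact ((h' v (τ v) (fun e => hv e.symm)).mpr this).symm

theorem stmt_3 {V : Type*} [Fintype V] (G : SimpleGraph V) (k : ℕ) (κ : Sym2 V → ℕ)
    (hκ : IsProperEdgeColoring G k κ) :
    coloringGroup G k κ ≤ Subgroup.centralizer { σ : Equiv.Perm V | IsColorAut G κ σ } ∧
    (3 ≤ Fintype.card V → coloringGroup G k κ = ⊤ →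
      ∀ σ : Equiv.Perm V, IsColorAut G κ σ → σ = 1) := by
  have hmain : coloringGroup G k κ ≤
      Subgroup.centralizer { σ : Equiv.Perm V | IsColorAut G κ σ } := by
    rw [coloringGroup, Subgroup.closure_le]
    rintro τ ⟨a, -, -, hτ⟩ σ hσ
    -- show σ * τ = τ * σ, i.e. σ τ σ⁻¹ = τ
    have hconj : IsToggle G κ a (σ * τ * σ⁻¹) := by
      intro v w hvw
      have hne : σ⁻¹ v ≠ σ⁻¹ w := fun e => hvw (σ⁻¹.injective e)
      have := hτ (σ⁻¹ v) (σ⁻¹ w) hne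
      have haut := hσ (σ⁻¹ v) (σ⁻¹ w) a
      simp only [Equiv.Perm.coe_inv, Equiv.apply_symm_apply] at haut
      constructor
      · intro hvw'
        have h1 : σ (τ (σ⁻¹ v)) = w := by
          simpa [Equiv.Perm.mul_apply] using hvw'
        have : τ (σ⁻¹ v) = σ⁻¹ w := by
          rw [← h1, Equiv.Perm.coe_inv, Equiv.symm_apply_apply]
        exact haut.mp ((hτ (σ⁻¹ v) (σ⁻¹ w) hne).mp this)
      · intro hadj
        have : τ (σ⁻¹ v) = σ⁻¹ w := (hτ (σ⁻¹ v) (σ⁻¹ w) hne).mpr (haut.mpr hadj)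
        simpa [Equiv.Perm.mul_apply] using congrArg σ this
    have heq : σ * τ * σ⁻¹ = τ := toggle_unique hconj hτ
    calc σ * τ = (σ * τ * σ⁻¹) * σ := by group
    _ = τ * σ := by rw [heq]
  refine ⟨hmain, fun hcard htop σ hσ => ?_⟩
  -- every permutation commutes with σ
  have hcomm : ∀ π : Equiv.Perm V, σ * π = π * σ := by
    intro π
    exact hmain (htop ▸ Subgroup.mem_top π) σ hσ
  by_contra hσ1
  obtain ⟨v, hv⟩ : ∃ v, σ v ≠ v := by
    by_contra h
    push_neg at h
    exact hσ1 (Equiv.ext h)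
  have : ∃ w, w ≠ v ∧ w ≠ σ v := by
    by_contra h
    push_neg at h
    have : (Finset.univ : Finset V) ⊆ {v, σ v} := by
      intro w _
      rcases eq_or_ne w v with rfl | hw
      · simp
      · simp [h w hw]
    have := Finset.card_le_card this
    rw [Finset.card_univ] at this
    have h2 : ({v, σ v} : Finset V).card ≤ 2 := Finset.card_insert_le _ _ |>.trans (by simp)
    omega
  obtain ⟨w, hwv, hwσv⟩ := this
  have := congrArg (fun π => π v) (hcomm (Equiv.swap (σ v) w))
  simp only [Equiv.Perm.mul_apply] at this
  rw [Equiv.swap_apply_of_ne_of_ne (fun e => hv e.symm) (fun e => hwv e.symm)] at this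
  rw [Equiv.swap_apply_left] at this
  exact hwσv this.symm
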